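/- (Second Decomposition Lemma, Lipschitz part.) Let S and B be independent [0,1]-valued random variables, each admitting a density (with respect to Lebesgue measure) bounded above by M ≥ 1. Then the map p ↦ E[gft(p,S,B)] is Lipschitz on [0,1] with Lipschitz constant 4M, i.e., |E[gft(q,S,B)] − E[gft(p,S,B)]| ≤ 4M·|q − p| for all p, q ∈ [0,1]. -/

import Mathlib

open MeasureTheory ProbabilityTheory Set
open scoped ENNReal

noncomputable def gft (p s b : ℝ) : ℝ := if s ≤ p ∧ p ≤ b then b - s else 0

lemma gft_diff_le (p q s b : ℝ) (hpq : p ≤ q) (hs : s ∈ Icc (0:ℝ) 1)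
    (hb : b ∈ Icc (0:ℝ) 1) :
    |gft q s b - gft p s b| ≤ (Icc p q).indicator 1 s + (Icc p q).indicator 1 b := by
  obtain ⟨hs0, hs1⟩ := hs; obtain ⟨hb0, hb1⟩ := hb
  have hiS : (0:ℝ) ≤ (Icc p q).indicator 1 s :=
    Set.indicator_nonneg (fun _ _ => zero_le_one) s
  have hiB : (0:ℝ) ≤ (Icc p q).indicator 1 b :=
    Set.indicator_nonneg (fun _ _ => zero_le_one) b
  unfold gft
  by_cases h1 : s ≤ q ∧ q ≤ b
  · by_cases h2 : s ≤ p ∧ p ≤ b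
    · rw [if_pos h1, if_pos h2, sub_self, abs_zero]; linarith
    · rw [if_pos h1, if_neg h2, sub_zero]
      push_neg at h2
      have hps : p ≤ s := by
        by_contra hc
        push_neg at hc
        exact absurd (h2 hc.le) (not_lt.2 (hpq.trans h1.2))
      have hsI : (Icc p q).indicator (1 : ℝ → ℝ) s = 1 :=
        Set.indicator_of_mem (mem_Icc.mpr ⟨hps, h1.1⟩) 1
      rw [hsI]
      have : |b - s| ≤ 1 := by rw [abs_le]; constructor <;> linarith
      linarith
  · by_cases h2 : s ≤ p ∧ p ≤ b
    · rw [if_neg h1, if_pos h2, zero_sub, abs_neg]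
      push_neg at h1
      have hbq : b ≤ q := by
        by_contra hc
        push_neg at hc
        exact absurd (h1 (h2.1.trans hpq)) (not_lt.2 hc.le)
      have hbI : (Icc p q).indicator (1 : ℝ → ℝ) b = 1 :=
        Set.indicator_of_mem (mem_Icc.mpr ⟨h2.2, hbq⟩) 1
      rw [hbI]
      have : |b - s| ≤ 1 := by rw [abs_le]; constructor <;> linarith
      linarith
    · rw [if_neg h1, if_neg h2, sub_self, abs_zero]; linarith

lemma meas_bound {Ω : Type} [MeasurableSpace Ω] (μ : Measure Ω) (S : Ω → ℝ)
    (hS : Measurable S) (fS : ℝ → ℝ≥0∞) (M : ℝ) (hM : 0 ≤ M)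
    (hfSbd : ∀ x, fS x ≤ ENNReal.ofReal M)
    (hlaw : μ.map S = volume.withDensity fS) (p q : ℝ) (hpq : p ≤ q) :
    (μ (S ⁻¹' Icc p q)).toReal ≤ M * (q - p) := by
  have h1 : μ (S ⁻¹' Icc p q) = (μ.map S) (Icc p q) :=
    (Measure.map_apply hS measurableSet_Icc).symm
  have h2 : (μ.map S) (Icc p q) ≤ ENNReal.ofReal (M * (q - p)) := by
    rw [hlaw, withDensity_apply _ measurableSet_Icc]
    calc ∫⁻ x in Icc p q, fS x ≤ ∫⁻ _ in Icc p q, ENNReal.ofReal M :=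
          lintegral_mono fun x => hfSbd x
      _ = ENNReal.ofReal M * volume (Icc p q) := by rw [setLIntegral_const]
      _ = ENNReal.ofReal (M * (q - p)) := by
          rw [Real.volume_Icc, ← ENNReal.ofReal_mul hM]
  exact ENNReal.toReal_le_of_le_ofReal (by nlinarith) (h1 ▸ h2)

theorem second_decomposition_lipschitz
    {Ω : Type} [MeasurableSpace Ω] (μ : Measure Ω) [IsProbabilityMeasure μ]
    (S B : Ω → ℝ) (hS : Measurable S) (hB : Measurable B)
    (hSr : ∀ ω, S ω ∈ Icc (0:ℝ) 1) (hBr : ∀ ω, B ω ∈ Icc (0:ℝ) 1)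
    (hindep : IndepFun S B μ)
    (M : ℝ) (hM : 1 ≤ M)
    (fS fB : ℝ → ℝ≥0∞) (hfS : Measurable fS) (hfB : Measurable fB)
    (hfSbd : ∀ x, fS x ≤ ENNReal.ofReal M) (hfBbd : ∀ x, fB x ≤ ENNReal.ofReal M)
    (hlawS : μ.map S = volume.withDensity fS)
    (hlawB : μ.map B = volume.withDensity fB) :
    ∀ p ∈ Icc (0:ℝ) 1, ∀ q ∈ Icc (0:ℝ) 1,
      |(∫ ω, gft q (S ω) (B ω) ∂μ) - ∫ ω, gft p (S ω) (B ω) ∂μ| ≤ 4 * M * |q - p| := by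
  have key : ∀ p q : ℝ, p ≤ q →
      |(∫ ω, gft q (S ω) (B ω) ∂μ) - ∫ ω, gft p (S ω) (B ω) ∂μ| ≤ 4 * M * (q - p) := by
    intro p q hpq
    have hmeas : ∀ r : ℝ, Measurable (fun ω => gft r (S ω) (B ω)) := by
      intro r
      unfold gft
      exact Measurable.ite ((measurableSet_le hS measurable_const).inter
        (measurableSet_le measurable_const hB)) (hB.sub hS) measurable_const
    have hint : ∀ r : ℝ, Integrable (fun ω => gft r (S ω) (B ω)) μ := by
      intro r
      refine (integrable_const (1:ℝ)).mono' (hmeas r).aestronglyMeasurable (ae_of_all _ ?_)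
      intro ω
      obtain ⟨hs0, hs1⟩ := hSr ω; obtain ⟨hb0, hb1⟩ := hBr ω
      rw [Real.norm_eq_abs]
      simp only [gft]
      split_ifs with h
      · rw [abs_le]; constructor <;> linarith
      · simp
    have hintS : Integrable ((S ⁻¹' Icc p q).indicator (fun _ => (1:ℝ))) μ :=
      (integrable_const (1:ℝ)).indicator (hS measurableSet_Icc)
    have hintB : Integrable ((B ⁻¹' Icc p q).indicator (fun _ => (1:ℝ))) μ :=
      (integrable_const (1:ℝ)).indicator (hB measurableSet_Icc)
    have step1 : |(∫ ω, gft q (S ω) (B ω) ∂μ) - ∫ ω, gft p (S ω) (B ω) ∂μ|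
        ≤ ∫ ω, |gft q (S ω) (B ω) - gft p (S ω) (B ω)| ∂μ := by
      rw [← integral_sub (hint q) (hint p)]
      simpa [Real.norm_eq_abs] using
        norm_integral_le_integral_norm (fun ω => gft q (S ω) (B ω) - gft p (S ω) (B ω)) (μ := μ)
    have step2 : ∫ ω, |gft q (S ω) (B ω) - gft p (S ω) (B ω)| ∂μ
        ≤ ∫ ω, ((S ⁻¹' Icc p q).indicator (fun _ => (1:ℝ)) ω
              + (B ⁻¹' Icc p q).indicator (fun _ => (1:ℝ)) ω) ∂μ := by
      refine integral_mono ((hint q).sub (hint p)).abs (hintS.add hintB) ?_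
      intro ω
      have h := gft_diff_le p q (S ω) (B ω) hpq (hSr ω) (hBr ω)
      have e1 : (S ⁻¹' Icc p q).indicator (fun _ => (1:ℝ)) ω
          = (Icc p q).indicator 1 (S ω) := by
        simp [Set.indicator, Set.mem_preimage]
      have e2 : (B ⁻¹' Icc p q).indicator (fun _ => (1:ℝ)) ω
          = (Icc p q).indicator 1 (B ω) := by
        simp [Set.indicator, Set.mem_preimage]
      simpa [e1, e2] using h
    have step3 : ∫ ω, ((S ⁻¹' Icc p q).indicator (fun _ => (1:ℝ)) ω
              + (B ⁻¹' Icc p q).indicator (fun _ => (1:ℝ)) ω) ∂μ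
        = (μ (S ⁻¹' Icc p q)).toReal + (μ (B ⁻¹' Icc p q)).toReal := by
      rw [integral_add hintS hintB]
      congr 1 <;>
        simp [integral_indicator_const, hS measurableSet_Icc, hB measurableSet_Icc, measureReal_def]
    have bS := meas_bound μ S hS fS M (by linarith) hfSbd hlawS p q hpq
    have bB := meas_bound μ B hB fB M (by linarith) hfBbd hlawB p q hpq
    calc |(∫ ω, gft q (S ω) (B ω) ∂μ) - ∫ ω, gft p (S ω) (B ω) ∂μ|
        ≤ (μ (S ⁻¹' Icc p q)).toReal + (μ (B ⁻¹' Icc p q)).toReal := by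
          rw [← step3]; exact step1.trans step2
      _ ≤ 4 * M * (q - p) := by nlinarith
  intro p hp q hq
  rcases le_total p q with h | h
  · have e : |q - p| = q - p := abs_of_nonneg (by linarith)
    rw [e]; exact key p q h
  · have e : |q - p| = p - q := by rw [abs_of_nonpos (by linarith)]; ring
    rw [e, abs_sub_comm]
    exact key q p h
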